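/- Let V be a finite set, let X, Y be randomly chosen disjoint subsets of V of equal size q (chosen so that the unordered pair {X,Y} is fixed but the assignment of labels is uniform over the two orderings), and for disjoint nonempty subsets P,Q of the vertex set of a weighted graph G on V let T*_{P,Q} be the inclusion-minimal minimum P-Q cut. Then T*_{X,Y} and T*_{Y,X} are disjoint, and consequently E[|T*_{A,B}|] ≤ |V|/2 when (A,B) is uniform over {(X,Y),(Y,X)}. -/
import Mathlib


open Finset

variable {V : Type*} [Fintype V] [DecidableEq V]

noncomputable section

/-- Cost of the cut `U`: total weight of edges crossing between `U` and its complement. -/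
def cutCost (w : V → V → ℝ) (U : Finset V) : ℝ :=
  ∑ u ∈ U, ∑ v ∈ Uᶜ, w u v

/-- `U` is an `S`-`T` cut: `T ⊆ U ⊆ V − S`. -/
def IsCut (S T U : Finset V) : Prop := T ⊆ U ∧ Disjoint U S

/-- Minimum cost of an `S`-`T` cut. -/
def minCutCost (w : V → V → ℝ) (S T : Finset V) : ℝ :=
  sInf (cutCost w '' {U : Finset V | IsCut S T U})

/-- `U` is a minimum `S`-`T` cut. -/
def IsMinCut (w : V → V → ℝ) (S T U : Finset V) : Prop :=
  IsCut S T U ∧ cutCost w U = minCutCost w S T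

/-- Auxiliary: total weight from `A` to `B`. -/
def eW (w : V → V → ℝ) (A B : Finset V) : ℝ := ∑ u ∈ A, ∑ v ∈ B, w u v

lemma eW_nonneg (w : V → V → ℝ) (hw : ∀ u v, 0 ≤ w u v) (A B : Finset V) :
    0 ≤ eW w A B :=
  Finset.sum_nonneg fun _ _ => Finset.sum_nonneg fun _ _ => hw _ _

lemma eW_union_left (w : V → V → ℝ) {A₁ A₂ : Finset V} (B : Finset V)
    (h : Disjoint A₁ A₂) : eW w (A₁ ∪ A₂) B = eW w A₁ B + eW w A₂ B := by
  unfold eW; rw [Finset.sum_union h]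

lemma eW_union_right (w : V → V → ℝ) (A : Finset V) {B₁ B₂ : Finset V}
    (h : Disjoint B₁ B₂) : eW w A (B₁ ∪ B₂) = eW w A B₁ + eW w A B₂ := by
  unfold eW
  rw [← Finset.sum_add_distrib]
  exact Finset.sum_congr rfl fun u _ => Finset.sum_union h

lemma eW_comm (w : V → V → ℝ) (hsym : ∀ u v, w u v = w v u) (A B : Finset V) :
    eW w A B = eW w B A := by
  unfold eW
  rw [Finset.sum_comm]
  exact Finset.sum_congr rfl fun u _ => Finset.sum_congr rfl fun v _ => hsym _ _

lemma cutCost_eq_eW (w : V → V → ℝ) (U : Finset V) : cutCost w U = eW w U Uᶜ := rfl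

lemma cutCost_nonneg (w : V → V → ℝ) (hw : ∀ u v, 0 ≤ w u v) (U : Finset V) :
    0 ≤ cutCost w U := eW_nonneg w hw U Uᶜ

lemma minCutCost_le (w : V → V → ℝ) (hw : ∀ u v, 0 ≤ w u v) (S T U : Finset V)
    (hU : IsCut S T U) : minCutCost w S T ≤ cutCost w U := by
  apply csInf_le
  · exact ⟨0, fun x ⟨U', _, hx⟩ => hx ▸ cutCost_nonneg w hw U'⟩
  · exact ⟨U, hU, rfl⟩

lemma posimodular (w : V → V → ℝ) (hw : ∀ u v, 0 ≤ w u v)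
    (hsym : ∀ u v, w u v = w v u) (A B : Finset V) :
    cutCost w (A \ B) + cutCost w (B \ A) ≤ cutCost w A + cutCost w B := by
  set P := A \ B with hP
  set Q := A ∩ B with hQ
  set R := B \ A with hR
  set S := (A ∪ B)ᶜ with hS
  have hPQ : Disjoint P Q := by
    rw [Finset.disjoint_left]; intro x hx hx'; simp [hP, hQ] at hx hx'; tauto
  have hRQ : Disjoint R Q := by
    rw [Finset.disjoint_left]; intro x hx hx'; simp [hR, hQ] at hx hx'; tauto
  have hRS : Disjoint R S := by
    rw [Finset.disjoint_left]; intro x hx hx'; simp [hR, hS] at hx hx'; tauto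
  have hPS : Disjoint P S := by
    rw [Finset.disjoint_left]; intro x hx hx'; simp [hP, hS] at hx hx'; tauto
  have hQRS : Disjoint Q (R ∪ S) := by
    rw [Finset.disjoint_left]; intro x hx hx'; simp [hQ, hR, hS] at hx hx'; tauto
  have hQPS : Disjoint Q (P ∪ S) := by
    rw [Finset.disjoint_left]; intro x hx hx'; simp [hQ, hP, hS] at hx hx'; tauto
  have hA : A = P ∪ Q := by ext x; simp [hP, hQ]; tauto
  have hAc : Aᶜ = R ∪ S := by ext x; simp [hR, hS]; tauto
  have hB : B = R ∪ Q := by ext x; simp [hR, hQ]; tauto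
  have hBc : Bᶜ = P ∪ S := by ext x; simp [hP, hS]; tauto
  have hPc : Pᶜ = Q ∪ (R ∪ S) := by ext x; simp [hP, hQ, hR, hS]; tauto
  have hRc : Rᶜ = Q ∪ (P ∪ S) := by ext x; simp [hP, hQ, hR, hS]; tauto
  have cA : cutCost w A = eW w P R + eW w P S + (eW w Q R + eW w Q S) := by
    rw [cutCost_eq_eW, hAc, hA, eW_union_left _ _ hPQ, eW_union_right _ _ hRS,
      eW_union_right _ _ hRS]
  have cB : cutCost w B = eW w R P + eW w R S + (eW w Q P + eW w Q S) := by
    rw [cutCost_eq_eW, hBc, hB, eW_union_left _ _ hRQ, eW_union_right _ _ hPS,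
      eW_union_right _ _ hPS]
  have cP : cutCost w (A \ B) = eW w P Q + (eW w P R + eW w P S) := by
    rw [cutCost_eq_eW]
    rw [show (A \ B) = P from rfl, hPc, eW_union_right _ _ hQRS, eW_union_right _ _ hRS]
  have cR : cutCost w (B \ A) = eW w R Q + (eW w R P + eW w R S) := by
    rw [cutCost_eq_eW]
    rw [show (B \ A) = R from rfl, hRc, eW_union_right _ _ hQPS, eW_union_right _ _ hPS]
  have e1 : eW w P Q = eW w Q P := eW_comm w hsym P Q
  have e2 : eW w R Q = eW w Q R := eW_comm w hsym R Q
  have e3 : 0 ≤ eW w Q S := eW_nonneg w hw Q S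
  linarith

/-- For disjoint equal-size `X, Y`, the inclusion-minimal minimum `X`-`Y` cut and the
inclusion-minimal minimum `Y`-`X` cut are disjoint; consequently, the expected size of
`T*_{A,B}` over the uniform choice `(A,B) ∈ {(X,Y),(Y,X)}` is at most `|V|/2`. -/
theorem minimal_minCuts_disjoint_expectation (w : V → V → ℝ) (hw : ∀ u v, 0 ≤ w u v)
    (hsym : ∀ u v, w u v = w v u)
    (X Y : Finset V) (hXY : Disjoint X Y) (hX : X.Nonempty) (hY : Y.Nonempty)
    (q : ℕ) (hqX : X.card = q) (hqY : Y.card = q)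
    (TXY TYX : Finset V)
    (hTXY : IsMinCut w X Y TXY)
    (hTXYmin : ∀ U, IsMinCut w X Y U → U ⊆ TXY → U = TXY)
    (hTYX : IsMinCut w Y X TYX)
    (hTYXmin : ∀ U, IsMinCut w Y X U → U ⊆ TYX → U = TYX) :
    Disjoint TXY TYX ∧
      ((TXY.card : ℝ) + (TYX.card : ℝ)) / 2 ≤ (Fintype.card V : ℝ) / 2 := by
  obtain ⟨⟨hYsub, hAdisj⟩, hAcost⟩ := hTXY
  obtain ⟨⟨hXsub, hBdisj⟩, hBcost⟩ := hTYX
  set A := TXY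
  set B := TYX
  -- A \ B is an X-Y cut
  have hABcut : IsCut X Y (A \ B) := by
    constructor
    · intro y hy
      rw [Finset.mem_sdiff]
      exact ⟨hYsub hy, fun hyB => (Finset.disjoint_right.mp hBdisj hy) hyB⟩
    · exact Finset.disjoint_of_subset_left (Finset.sdiff_subset) hAdisj
  have hBAcut : IsCut Y X (B \ A) := by
    constructor
    · intro x hx
      rw [Finset.mem_sdiff]
      exact ⟨hXsub hx, fun hxA => (Finset.disjoint_right.mp hAdisj hx) hxA⟩
    · exact Finset.disjoint_of_subset_left (Finset.sdiff_subset) hBdisj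
  have h1 : minCutCost w X Y ≤ cutCost w (A \ B) := minCutCost_le w hw X Y _ hABcut
  have h2 : minCutCost w Y X ≤ cutCost w (B \ A) := minCutCost_le w hw Y X _ hBAcut
  have hpos := posimodular w hw hsym A B
  have hAB : cutCost w (A \ B) = minCutCost w X Y := by linarith
  have hmin : A \ B = A := hTXYmin (A \ B) ⟨hABcut, hAB⟩ Finset.sdiff_subset
  have hdisj : Disjoint A B := by
    rw [Finset.disjoint_left]
    intro x hxA hxB
    rw [← hmin, Finset.mem_sdiff] at hxA
    exact hxA.2 hxB
  refine ⟨hdisj, ?_⟩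
  have hcard : A.card + B.card ≤ Fintype.card V := by
    rw [← Finset.card_union_of_disjoint hdisj]
    exact Finset.card_le_univ _
  have : (A.card : ℝ) + (B.card : ℝ) ≤ (Fintype.card V : ℝ) := by
    exact_mod_cast hcard
  linarith
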